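/- Let Γ be a circulant on a finite vertex type with n₁ vertices and Σ a circulant on a finite vertex type with n₂ vertices, where n₁ and n₂ are coprime. Then the tensor product Γ × Σ is a circulant. -/

import Mathlib

/-- A permutation `e` is an automorphism of the digraph with adjacency `Adj`. -/
def IsDigraphAut {V : Type*} (Adj : V → V → Prop) (e : Equiv.Perm V) : Prop :=
  ∀ x y, Adj x y ↔ Adj (e x) (e y)

/-- The automorphism group of a digraph, as a subgroup of the permutation group. -/
def autGroup {V : Type*} (Adj : V → V → Prop) : Subgroup (Equiv.Perm V) where
  carrier := {e | IsDigraphAut Adj e}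
  one_mem' := by intro x y; exact Iff.rfl
  mul_mem' := by
    intro a b ha hb x y
    exact (hb x y).trans (ha (b x) (b y))
  inv_mem' := by
    intro a ha x y
    simpa using (ha (a⁻¹ x) (a⁻¹ y)).symm

/-- A digraph is arc-transitive if its automorphism group is transitive on arcs. -/
def ArcTransitive {V : Type*} (Adj : V → V → Prop) : Prop :=
  ∀ x y u v, Adj x y → Adj u v → ∃ e ∈ autGroup Adj, e x = u ∧ e y = v

/-- A subgroup of the permutation group of `V` is regular on `V`. -/
def IsRegularSub {V : Type*} (H : Subgroup (Equiv.Perm V)) : Prop :=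
  ∀ u v : V, ∃! h : H, (h : Equiv.Perm V) u = v

/-- A circulant: the automorphism group contains a regular cyclic subgroup. -/
def IsCirculant {V : Type*} (Adj : V → V → Prop) : Prop :=
  ∃ H : Subgroup (Equiv.Perm V), H ≤ autGroup Adj ∧ IsCyclic H ∧ IsRegularSub H

/-- A normal circulant: the automorphism group contains a regular cyclic subgroup
that is normal in the automorphism group. -/
def IsNormalCirculant {V : Type*} (Adj : V → V → Prop) : Prop :=
  ∃ H : Subgroup (Equiv.Perm V), H ≤ autGroup Adj ∧ IsCyclic H ∧ IsRegularSub H ∧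
    ∀ e ∈ autGroup Adj, ∀ h ∈ H, e * h * e⁻¹ ∈ H

/-- Tensor (direct) product of digraphs. -/
def tensorAdj {V₁ V₂ : Type*} (Adj₁ : V₁ → V₁ → Prop) (Adj₂ : V₂ → V₂ → Prop) :
    V₁ × V₂ → V₁ × V₂ → Prop :=
  fun p q => Adj₁ p.1 q.1 ∧ Adj₂ p.2 q.2

/-- Lexicographic product `Γ[Kbar_b]` with the edgeless digraph on `b` vertices. -/
def lexAdj {V : Type*} (Adj : V → V → Prop) (b : ℕ) : V × Fin b → V × Fin b → Prop :=
  fun p q => Adj p.1 q.1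

/-- Digraph isomorphism. -/
def DigraphIso {V₁ V₂ : Type*} (Adj₁ : V₁ → V₁ → Prop) (Adj₂ : V₂ → V₂ → Prop) : Prop :=
  ∃ e : V₁ ≃ V₂, ∀ x y, Adj₁ x y ↔ Adj₂ (e x) (e y)

/-- Connectedness: the reflexive–symmetric–transitive closure of adjacency
relates every pair of vertices. -/
def DigraphConnected {V : Type*} (Adj : V → V → Prop) : Prop :=
  ∀ u v : V, Relation.ReflTransGen (fun a b => Adj a b ∨ Adj b a) u v

/-- R-thick digraph: two distinct vertices with the same in- and out-neighbourhoods. -/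
def RThick {V : Type*} (Adj : V → V → Prop) : Prop :=
  ∃ u v : V, u ≠ v ∧ (∀ w, Adj u w ↔ Adj v w) ∧ (∀ w, Adj w u ↔ Adj w v)

/-- The directed 4-cycle on `ZMod 4`. -/
def C4Adj : ZMod 4 → ZMod 4 → Prop := fun x y => y - x = 1 ∨ y - x = 3

/-- Cayley digraph of a group `G` with connection set `S`. -/
def cayAdj (G : Type*) [Group G] (S : Set G) : G → G → Prop :=
  fun x y => y * x⁻¹ ∈ S

/-- The right-regular representation of `G` inside `Equiv.Perm G`. -/
def rightReg (G : Type*) [Group G] : Subgroup (Equiv.Perm G) where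
  carrier := {e | ∃ g : G, ∀ x, e x = x * g}
  one_mem' := ⟨1, by simp⟩
  mul_mem' := by
    rintro a b ⟨g, hg⟩ ⟨h, hh⟩
    exact ⟨h * g, fun x => by simp [Equiv.Perm.mul_apply, hh, hg, mul_assoc]⟩
  inv_mem' := by
    rintro a ⟨g, hg⟩
    refine ⟨g⁻¹, fun x => a.injective ?_⟩
    rw [show a (a⁻¹ x) = x by simp, hg]
    simp

/-- Cayley digraph of `ZMod n` with connection set `S`. -/
def zcayAdj (n : ℕ) (S : Set (ZMod n)) : ZMod n → ZMod n → Prop :=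
  fun x y => y - x ∈ S

/-- The translation subgroup of `Equiv.Perm (ZMod n)`. -/
def transSub (n : ℕ) : Subgroup (Equiv.Perm (ZMod n)) where
  carrier := {e | ∃ g : ZMod n, ∀ x, e x = x + g}
  one_mem' := ⟨0, by simp⟩
  mul_mem' := by
    rintro a b ⟨g, hg⟩ ⟨h, hh⟩
    exact ⟨h + g, fun x => by simp [Equiv.Perm.mul_apply, hh, hg, add_assoc]⟩
  inv_mem' := by
    rintro a ⟨g, hg⟩
    refine ⟨-g, fun x => a.injective ?_⟩
    rw [show a (a⁻¹ x) = x by simp, hg]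
    simp

lemma cyclic_prod_aux {A B : Type*} [Group A] [Group B] [Finite A] [Finite B]
    [IsCyclic A] [IsCyclic B] (h : Nat.Coprime (Nat.card A) (Nat.card B)) :
    IsCyclic (A × B) := by
  obtain ⟨a, ha⟩ := IsCyclic.exists_generator (α := A)
  obtain ⟨b, hb⟩ := IsCyclic.exists_generator (α := B)
  refine isCyclic_of_orderOf_eq_card (a, b) ?_
  rw [Prod.orderOf, orderOf_eq_card_of_forall_mem_zpowers ha,
    orderOf_eq_card_of_forall_mem_zpowers hb, Nat.Coprime.lcm_eq_mul h,
    Nat.card_prod]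

lemma regular_card {V : Type*} [Nonempty V] (H : Subgroup (Equiv.Perm V))
    (hH : IsRegularSub H) : Nat.card H = Nat.card V := by
  classical
  obtain ⟨u⟩ := ‹Nonempty V›
  have : Function.Bijective (fun h : H => (h : Equiv.Perm V) u) := by
    constructor
    · intro a b hab
      obtain ⟨h, _, huniq⟩ := hH u ((a : Equiv.Perm V) u)
      exact (huniq a rfl).trans (huniq b hab.symm).symm
    · intro v
      obtain ⟨h, hh, _⟩ := hH u v
      exact ⟨h, hh⟩
  exact Nat.card_congr (Equiv.ofBijective _ this)

theorem stmt1 {V₁ V₂ : Type*} [Fintype V₁] [Fintype V₂] [Nonempty V₁] [Nonempty V₂]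
    (Adj₁ : V₁ → V₁ → Prop) (Adj₂ : V₂ → V₂ → Prop)
    (h₁ : IsCirculant Adj₁) (h₂ : IsCirculant Adj₂)
    (hco : Nat.Coprime (Fintype.card V₁) (Fintype.card V₂)) :
    IsCirculant (tensorAdj Adj₁ Adj₂) := by
  classical
  obtain ⟨H₁, hle₁, hcyc₁, hreg₁⟩ := h₁
  obtain ⟨H₂, hle₂, hcyc₂, hreg₂⟩ := h₂
  let φ : (H₁ × H₂) →* Equiv.Perm (V₁ × V₂) :=
    { toFun := fun p => Equiv.prodCongr (p.1 : Equiv.Perm V₁) (p.2 : Equiv.Perm V₂)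
      map_one' := by ext x <;> rfl
      map_mul' := by intro a b; ext x <;> rfl }
  refine ⟨φ.range, ?_, ?_, ?_⟩
  · rintro e ⟨⟨a, b⟩, rfl⟩ x y
    constructor
    · rintro ⟨hx, hy⟩
      exact ⟨(hle₁ a.2 x.1 y.1).mp hx, (hle₂ b.2 x.2 y.2).mp hy⟩
    · rintro ⟨hx, hy⟩
      exact ⟨(hle₁ a.2 x.1 y.1).mpr hx, (hle₂ b.2 x.2 y.2).mpr hy⟩
  · have hcop : Nat.Coprime (Nat.card H₁) (Nat.card H₂) := by
      rw [regular_card H₁ hreg₁, regular_card H₂ hreg₂,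
        Nat.card_eq_fintype_card, Nat.card_eq_fintype_card]
      exact hco
    have : IsCyclic (H₁ × H₂) := cyclic_prod_aux hcop
    exact isCyclic_of_surjective φ.rangeRestrict φ.rangeRestrict_surjective
  · rintro ⟨u₁, u₂⟩ ⟨v₁, v₂⟩
    obtain ⟨a, ha, ha'⟩ := hreg₁ u₁ v₁
    obtain ⟨b, hb, hb'⟩ := hreg₂ u₂ v₂
    refine ⟨⟨φ (a, b), ⟨(a, b), rfl⟩⟩, Prod.ext ha hb, ?_⟩
    rintro ⟨e, ⟨⟨c, d⟩, rfl⟩⟩ he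
    have hc : (c : Equiv.Perm V₁) u₁ = v₁ := congrArg Prod.fst he
    have hd : (d : Equiv.Perm V₂) u₂ = v₂ := congrArg Prod.snd he
    have h1 : c = a := (ha' c hc).symm ▸ (ha' c hc)
    have h2 : d = b := hb' d hd
    exact Subtype.ext (by rw [ha' c hc, h2])
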